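/- Suppose F(0,t) satisfies f(0,0) = 0, i.e. the zero function yields F-value zero at t = 0, and suppose: (A′) ‖F(u,t) − A(u(t))‖ ≤ f(r,t) whenever ‖u(s)‖ ≤ r for all s ∈ [0,t]; (E′) ‖F_u(u,t) − A∘ev_t‖ ≤ f_r′(r,t) (operator norm) whenever ‖u(s)‖ ≤ r for all s ∈ [0,t]; (G) f(r,t) and its partial derivative f_r′(r,t) are nonnegative and monotone increasing in (r,t), positive for r > 0, t > 0, f(0,0) = 0, ‖A⁻¹‖·f_r′(0,0) < 1, and r ↦ f(r,t) is convex for each t. If the pair (r⁺, T⁺) with r⁺ > 0, T⁺ > 0 satisfies the algebraic majorant system r⁺ = ‖A⁻¹‖ f(r⁺,T⁺) and 1 = ‖A⁻¹‖ f_r′(r⁺,T⁺), then the equation F(u,t) = 0 has a continuous solution u⁺ : [0,T⁺] → E₁ with max_{0 ≤ t ≤ T⁺} ‖u⁺(t)‖ ≤ r⁺, and the successive approximations u₀ = 0, u_n(t) = u_{n−1}(t) − A⁻¹(F(u_{n−1},t)) converge to u⁺ uniformly on [0,T⁺]. -/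

import Mathlib

/-- **Theorem 2** (Sidorov–Sidorov, algebraic majorants). Under conditions (A′),
(E′), (G), if `(r⁺, T⁺)` solves the algebraic majorant system
`r = ‖A⁻¹‖ f(r,t)`, `1 = ‖A⁻¹‖ f_r′(r,t)`, then `F(u,t) = 0` has a continuous
solution `u⁺ : [0,T⁺] → E₁` with `max_{0≤t≤T⁺} ‖u⁺(t)‖ ≤ r⁺`, obtained as the
uniform limit of the successive approximations `u₀ = 0`,
`u_n(t) = u_{n-1}(t) − A⁻¹ F(u_{n-1}, t)`. -/
theorem stmt_10
    {E₁ E₂ : Type*} [NormedAddCommGroup E₁] [NormedSpace ℝ E₁] [CompleteSpace E₁]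
    [NormedAddCommGroup E₂] [NormedSpace ℝ E₂] [CompleteSpace E₂]
    (Tp rp : ℝ) (hTp : 0 < Tp) (hrp : 0 < rp)
    (A : E₁ →L[ℝ] E₂) (Ainv : E₂ →L[ℝ] E₁)
    (hA₁ : ∀ x, Ainv (A x) = x) (hA₂ : ∀ y, A (Ainv y) = y)
    (F : C(Set.Icc (0:ℝ) Tp, E₁) → ℝ → E₂)
    -- continuity of `F` in `(u,t)`
    (hFc : Continuous fun p : C(Set.Icc (0:ℝ) Tp, E₁) × ℝ => F p.1 p.2)
    -- `F(0, 0) = 0`: the zero function yields `F`-value zero at `t = 0`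
    (hF00 : F 0 0 = 0)
    -- Fréchet differentiability of `F` in `u`
    (F' : C(Set.Icc (0:ℝ) Tp, E₁) → ℝ → (C(Set.Icc (0:ℝ) Tp, E₁) →L[ℝ] E₂))
    (hFd : ∀ (u : C(Set.Icc (0:ℝ) Tp, E₁)) (t : Set.Icc (0:ℝ) Tp),
      HasFDerivAt (fun v => F v (t : ℝ)) (F' u (t : ℝ)) u)
    (f f' : ℝ → ℝ → ℝ)
    -- condition (A′)
    (condA' : ∀ (r : ℝ) (u : C(Set.Icc (0:ℝ) Tp, E₁)) (t : Set.Icc (0:ℝ) Tp),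
      (∀ s : Set.Icc (0:ℝ) Tp, (s : ℝ) ≤ (t : ℝ) → ‖u s‖ ≤ r) →
      ‖F u (t : ℝ) - A (u t)‖ ≤ f r (t : ℝ))
    -- condition (E′), with the operator norm
    (condE' : ∀ (r : ℝ) (u : C(Set.Icc (0:ℝ) Tp, E₁)) (t : Set.Icc (0:ℝ) Tp),
      (∀ s : Set.Icc (0:ℝ) Tp, (s : ℝ) ≤ (t : ℝ) → ‖u s‖ ≤ r) →
      ‖F' u (t : ℝ) - A.comp (ContinuousMap.evalCLM ℝ t)‖ ≤ f' r (t : ℝ))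
    -- condition (G)
    (hfnn : ∀ r ≥ (0:ℝ), ∀ t ≥ (0:ℝ), 0 ≤ f r t ∧ 0 ≤ f' r t)
    (hfm : ∀ r₁ r₂ t₁ t₂ : ℝ, 0 ≤ r₁ → r₁ ≤ r₂ → 0 ≤ t₁ → t₁ ≤ t₂ →
      f r₁ t₁ ≤ f r₂ t₂ ∧ f' r₁ t₁ ≤ f' r₂ t₂)
    (hfpos : ∀ r > (0:ℝ), ∀ t > (0:ℝ), 0 < f r t ∧ 0 < f' r t)
    (hf00 : f 0 0 = 0)
    (hsmall : ‖Ainv‖ * f' 0 0 < 1)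
    (hconv : ∀ t ≥ (0:ℝ), ConvexOn ℝ (Set.Ici 0) fun r => f r t)
    -- `f'` is the partial derivative of `f` in `r`
    (hfd : ∀ t ≥ (0:ℝ), ∀ r ∈ Set.Ici (0:ℝ),
      HasDerivWithinAt (fun ρ => f ρ t) (f' r t) (Set.Ici 0) r)
    -- the pair `(r⁺, T⁺)` solves the algebraic majorant system
    (hsys₁ : rp = ‖Ainv‖ * f rp Tp)
    (hsys₂ : 1 = ‖Ainv‖ * f' rp Tp)
    -- the successive approximations
    (useq : ℕ → C(Set.Icc (0:ℝ) Tp, E₁)) (hu0 : useq 0 = 0)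
    (hurec : ∀ (n : ℕ) (t : Set.Icc (0:ℝ) Tp),
      useq (n + 1) t = useq n t - Ainv (F (useq n) (t : ℝ))) :
    ∃ uplus : C(Set.Icc (0:ℝ) Tp, E₁),
      (∀ t : Set.Icc (0:ℝ) Tp, F uplus (t : ℝ) = 0) ∧
      ‖uplus‖ ≤ rp ∧
      Filter.Tendsto useq Filter.atTop (nhds uplus) := by
  classical
  set K : ℝ := ‖Ainv‖ with hK
  have hK0 : 0 ≤ K := norm_nonneg _
  -- the scalar majorant sequence
  let r : ℕ → ℝ := fun n => Nat.rec (0:ℝ) (fun _ rn => K * f rn Tp) n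
  have hr0 : r 0 = 0 := rfl
  have hrs : ∀ n, r (n+1) = K * f (r n) Tp := fun n => rfl
  have hrb : ∀ n, 0 ≤ r n ∧ r n ≤ rp := by
    intro n
    induction n with
    | zero => exact ⟨le_refl 0, hrp.le⟩
    | succ n ih =>
      refine ⟨mul_nonneg hK0 (hfnn _ ih.1 _ hTp.le).1, ?_⟩
      rw [hrs]
      calc K * f (r n) Tp ≤ K * f rp Tp :=
            mul_le_mul_of_nonneg_left (hfm _ _ _ _ ih.1 ih.2 hTp.le le_rfl).1 hK0
        _ = rp := hsys₁.symm
  have hrmono : Monotone r := by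
    apply monotone_nat_of_le_succ
    intro n
    induction n with
    | zero => exact hr0 ▸ mul_nonneg hK0 (hfnn _ le_rfl _ hTp.le).1
    | succ n ih =>
      rw [hrs n, hrs (n+1)]
      exact mul_le_mul_of_nonneg_left
        (hfm _ _ _ _ (hrb n).1 (by simpa [hrs] using ih) hTp.le le_rfl).1 hK0
  -- the key mean-value estimate
  have step : ∀ n : ℕ, (∀ σ : Set.Icc (0:ℝ) Tp, ‖useq n σ‖ ≤ r n) →
      (∀ σ : Set.Icc (0:ℝ) Tp, ‖useq (n+1) σ - useq n σ‖ ≤ r (n+1) - r n) →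
      ∀ t : Set.Icc (0:ℝ) Tp, ‖F (useq (n+1)) (t:ℝ)‖ ≤ f (r (n+1)) Tp - f (r n) Tp := by
    intro n h1 h2 t
    set u : C(Set.Icc (0:ℝ) Tp, E₁) := useq n with hudef
    set Δ : C(Set.Icc (0:ℝ) Tp, E₁) := useq (n+1) - useq n with hΔdef
    set δ : ℝ := r (n+1) - r n with hδdef
    have hδ0 : 0 ≤ δ := sub_nonneg.2 (hrmono n.le_succ)
    have hrn0 : 0 ≤ r n := (hrb n).1
    have hΔn : ‖Δ‖ ≤ δ := by
      refine (ContinuousMap.norm_le _ hδ0).2 (fun σ => ?_)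
      simpa [hΔdef, ContinuousMap.sub_apply] using h2 σ
    set c : E₂ := A (Δ t) with hcdef
    have hc : c = - F u (t:ℝ) := by
      have hΔt : Δ t = -(Ainv (F u (t:ℝ))) := by
        simp [hΔdef, hurec n t, hudef, sub_sub_cancel_left]
      rw [hcdef, hΔt, map_neg, hA₂]
    set p : ℝ → C(Set.Icc (0:ℝ) Tp, E₁) := fun s => u + s • Δ with hpdef
    have hp : ∀ s : ℝ, HasDerivAt p Δ s := by
      intro s
      exact (one_smul ℝ Δ) ▸ (((hasDerivAt_id s).smul_const Δ).const_add u)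
    have hpb : ∀ s ∈ Set.Icc (0:ℝ) 1, ∀ σ : Set.Icc (0:ℝ) Tp,
        ‖p s σ‖ ≤ r n + s * δ := by
      intro s hs σ
      have : p s σ = u σ + s • (Δ σ) := by simp [hpdef]
      rw [this]
      calc ‖u σ + s • Δ σ‖ ≤ ‖u σ‖ + ‖s • Δ σ‖ := norm_add_le _ _
        _ ≤ r n + s * δ := by
            refine add_le_add (h1 σ) ?_
            rw [norm_smul, Real.norm_eq_abs, abs_of_nonneg hs.1]
            exact mul_le_mul_of_nonneg_left
              ((Δ.norm_coe_le_norm σ).trans hΔn) hs.1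
    set g : ℝ → E₂ := fun s => F (p s) (t:ℝ) - F u (t:ℝ) - s • c with hgdef
    set g' : ℝ → E₂ :=
      fun s => (F' (p s) (t:ℝ) - A.comp (ContinuousMap.evalCLM ℝ t)) Δ with hg'def
    have hg' : ∀ s : ℝ, HasDerivAt g (g' s) s := by
      intro s
      have h1' : HasDerivAt (fun s => F (p s) (t:ℝ)) (F' (p s) (t:ℝ) Δ) s :=
        (hFd (p s) t).comp_hasDerivAt s (hp s)
      have h2' : HasDerivAt (fun s : ℝ => s • c) c s := by
        simpa using (hasDerivAt_id s).smul_const c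
      have h3' := (h1'.sub_const (F u (t:ℝ))).sub h2'
      have : g' s = F' (p s) (t:ℝ) Δ - c := by
        simp [hg'def, hcdef, ContinuousLinearMap.sub_apply,
          ContinuousLinearMap.comp_apply, ContinuousMap.evalCLM]
      rw [this]
      exact h3'
    set B : ℝ → ℝ := fun s => f (r n + s * δ) Tp - f (r n) Tp with hBdef
    set B' : ℝ → ℝ := fun s => f' (r n + s * δ) Tp * δ with hB'def
    have hBc : ContinuousOn B (Set.Icc 0 1) := by
      have hfc : ContinuousOn (fun ρ => f ρ Tp) (Set.Ici 0) :=
        fun ρ hρ => (hfd Tp hTp.le ρ hρ).continuousWithinAt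
      have haffc : Continuous (fun s : ℝ => r n + s * δ) :=
        continuous_const.add (continuous_id.mul continuous_const)
      refine ContinuousOn.sub ?_ continuousOn_const
      exact hfc.comp haffc.continuousOn
        (fun s hs => add_nonneg hrn0 (mul_nonneg hs.1 hδ0))
    have hB' : ∀ s ∈ Set.Ico (0:ℝ) 1, HasDerivWithinAt B (B' s) (Set.Ici s) s := by
      intro s hs
      have haff : HasDerivWithinAt (fun s : ℝ => r n + s * δ) δ (Set.Ici s) s := by
        simpa using ((((hasDerivAt_id s).mul_const δ).const_add (r n)).hasDerivWithinAt
          (s := Set.Ici s))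
      have hmem : r n + s * δ ∈ Set.Ici (0:ℝ) :=
        add_nonneg hrn0 (mul_nonneg hs.1 hδ0)
      have hmaps : Set.MapsTo (fun s : ℝ => r n + s * δ) (Set.Ici s) (Set.Ici 0) :=
        fun x hx => add_nonneg hrn0 (mul_nonneg (hs.1.trans hx) hδ0)
      exact ((hfd Tp hTp.le _ hmem).comp s haff hmaps).sub_const _
    have hbound : ∀ s ∈ Set.Ico (0:ℝ) 1, ‖g' s‖ ≤ B' s := by
      intro s hs
      have hmem : (0:ℝ) ≤ r n + s * δ := add_nonneg hrn0 (mul_nonneg hs.1 hδ0)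
      have hop : ‖F' (p s) (t:ℝ) - A.comp (ContinuousMap.evalCLM ℝ t)‖
          ≤ f' (r n + s * δ) (t:ℝ) :=
        condE' _ (p s) t (fun σ _ => hpb s ⟨hs.1, hs.2.le⟩ σ)
      have hmt : f' (r n + s * δ) (t:ℝ) ≤ f' (r n + s * δ) Tp :=
        (hfm _ _ _ _ hmem le_rfl t.2.1 t.2.2).2
      calc ‖g' s‖ ≤ ‖F' (p s) (t:ℝ) - A.comp (ContinuousMap.evalCLM ℝ t)‖ * ‖Δ‖ :=
            ContinuousLinearMap.le_opNorm _ _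
        _ ≤ f' (r n + s * δ) Tp * δ :=
            mul_le_mul (hop.trans hmt) hΔn (norm_nonneg _) (hfnn _ hmem _ hTp.le).2
        _ = B' s := rfl
    have hgc : ContinuousOn g (Set.Icc 0 1) :=
      (Continuous.continuousOn (continuous_iff_continuousAt.2
        (fun s => (hg' s).continuousAt)))
    have hga : ‖g 0‖ ≤ B 0 := by simp [hgdef, hBdef, hpdef]
    have hmain := image_norm_le_of_norm_deriv_right_le_deriv_boundary' hgc
      (fun s hs => (hg' s).hasDerivWithinAt) hga hBc hB' hbound
      (Set.right_mem_Icc.2 zero_le_one)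
    have hp1 : p 1 = useq (n+1) := by
      ext σ
      simp [hpdef, hΔdef, hudef, ContinuousMap.sub_apply]
    have hg1 : g 1 = F (useq (n+1)) (t:ℝ) := by
      rw [hgdef]
      simp only [hp1, one_smul, hc]
      abel
    have hB1 : B 1 = f (r (n+1)) Tp - f (r n) Tp := by
      simp [hBdef, hδdef]
    rw [hg1, hB1] at hmain
    exact hmain
  -- the comparison between `useq` and `r`
  have key : ∀ n : ℕ, (∀ σ : Set.Icc (0:ℝ) Tp, ‖useq n σ‖ ≤ r n) ∧
      (∀ σ : Set.Icc (0:ℝ) Tp, ‖useq (n+1) σ - useq n σ‖ ≤ r (n+1) - r n) := by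
    intro n
    induction n with
    | zero =>
      constructor
      · intro σ; simp [hu0, hr0]
      · intro σ
        have h0 : useq 1 σ - useq 0 σ = -(Ainv (F (useq 0) (σ:ℝ))) := by
          simp [hurec 0 σ, sub_sub_cancel_left]
        have hF0 : ‖F (useq 0) (σ:ℝ)‖ ≤ f 0 Tp := by
          rw [hu0]
          have h := condA' 0 0 σ (fun s _ => by simp)
          simp only [ContinuousMap.zero_apply, map_zero, sub_zero] at h
          exact h.trans (hfm 0 0 (σ:ℝ) Tp le_rfl le_rfl σ.2.1 σ.2.2).1
        rw [h0, norm_neg]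
        calc ‖Ainv (F (useq 0) (σ:ℝ))‖ ≤ K * ‖F (useq 0) (σ:ℝ)‖ :=
              Ainv.le_opNorm _
          _ ≤ K * f 0 Tp := mul_le_mul_of_nonneg_left hF0 hK0
          _ = r 1 - r 0 := by
              have h1 : r 1 = K * f 0 Tp := by
                have := hrs 0; simpa [hr0] using this
              rw [h1, hr0]; ring
    | succ n ih =>
      have h1 : ∀ σ : Set.Icc (0:ℝ) Tp, ‖useq (n+1) σ‖ ≤ r (n+1) := by
        intro σ
        have habel : useq n σ + (useq (n+1) σ - useq n σ) = useq (n+1) σ := by abel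
        calc ‖useq (n+1) σ‖ = ‖useq n σ + (useq (n+1) σ - useq n σ)‖ := by rw [habel]
          _ ≤ ‖useq n σ‖ + ‖useq (n+1) σ - useq n σ‖ := norm_add_le _ _
          _ ≤ r n + (r (n+1) - r n) := add_le_add (ih.1 σ) (ih.2 σ)
          _ = r (n+1) := by ring
      refine ⟨h1, fun σ => ?_⟩
      have hFb := step n ih.1 ih.2 σ
      have h0 : useq (n+1+1) σ - useq (n+1) σ = -(Ainv (F (useq (n+1)) (σ:ℝ))) := by
        simp [hurec (n+1) σ, sub_sub_cancel_left]
      rw [h0, norm_neg]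
      calc ‖Ainv (F (useq (n+1)) (σ:ℝ))‖ ≤ K * ‖F (useq (n+1)) (σ:ℝ)‖ :=
            Ainv.le_opNorm _
        _ ≤ K * (f (r (n+1)) Tp - f (r n) Tp) := mul_le_mul_of_nonneg_left hFb hK0
        _ = r (n+1+1) - r (n+1) := by rw [hrs (n+1), hrs n]; ring
  -- sup-norm bounds
  have hun : ∀ n, ‖useq n‖ ≤ r n := fun n =>
    (ContinuousMap.norm_le _ (hrb n).1).2 (key n).1
  have hdiff : ∀ n k, ‖useq (n+k) - useq n‖ ≤ r (n+k) - r n := by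
    intro n k
    induction k with
    | zero => simp
    | succ k ih =>
      have h1 : ‖useq (n+k+1) - useq (n+k)‖ ≤ r (n+k+1) - r (n+k) := by
        refine (ContinuousMap.norm_le _ (sub_nonneg.2 (hrmono (n+k).le_succ))).2
          (fun σ => ?_)
        simpa [ContinuousMap.sub_apply] using (key (n+k)).2 σ
      calc ‖useq (n+(k+1)) - useq n‖
          = ‖(useq (n+k+1) - useq (n+k)) + (useq (n+k) - useq n)‖ := by
            congr 1; abel_nf
        _ ≤ ‖useq (n+k+1) - useq (n+k)‖ + ‖useq (n+k) - useq n‖ := norm_add_le _ _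
        _ ≤ (r (n+k+1) - r (n+k)) + (r (n+k) - r n) := add_le_add h1 ih
        _ = r (n+(k+1)) - r n := by ring_nf
  -- convergence of the scalar sequence
  have hbdd : BddAbove (Set.range r) := ⟨rp, by rintro x ⟨n, rfl⟩; exact (hrb n).2⟩
  set L : ℝ := ⨆ n, r n with hL
  have hrtend : Filter.Tendsto r Filter.atTop (nhds L) :=
    tendsto_atTop_ciSup hrmono hbdd
  have hrleL : ∀ n, r n ≤ L := fun n => le_ciSup hbdd n
  -- `useq` is Cauchy
  have hcauchy : CauchySeq useq := by
    refine cauchySeq_of_le_tendsto_0 (fun N => L - r N) ?_ ?_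
    · intro m n N hm hn
      rcases le_total m n with h | h
      · obtain ⟨k, rfl⟩ := Nat.exists_eq_add_of_le h
        rw [dist_comm, dist_eq_norm]
        calc ‖useq (m+k) - useq m‖ ≤ r (m+k) - r m := hdiff m k
          _ ≤ L - r N := sub_le_sub (hrleL _) (hrmono hm)
      · obtain ⟨k, rfl⟩ := Nat.exists_eq_add_of_le h
        rw [dist_eq_norm]
        calc ‖useq (n+k) - useq n‖ ≤ r (n+k) - r n := hdiff n k
          _ ≤ L - r N := sub_le_sub (hrleL _) (hrmono hn)
    · have : Filter.Tendsto (fun N => L - r N) Filter.atTop (nhds (L - L)) :=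
        (tendsto_const_nhds.sub hrtend)
      simpa using this
  obtain ⟨uplus, hlim⟩ := cauchySeq_tendsto_of_complete hcauchy
  have hev : ∀ t : Set.Icc (0:ℝ) Tp,
      Filter.Tendsto (fun n => useq n t) Filter.atTop (nhds (uplus t)) := by
    intro t
    exact ((continuous_eval_const t).tendsto uplus).comp hlim
  refine ⟨uplus, ?_, ?_, hlim⟩
  · intro t
    have h1 : Filter.Tendsto (fun n => useq (n+1) t - useq n t)
        Filter.atTop (nhds 0) := by
      have := ((hev t).comp (Filter.tendsto_add_atTop_nat 1)).sub (hev t)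
      simpa using this
    have h2 : (fun n => useq (n+1) t - useq n t)
        = fun n => -(Ainv (F (useq n) (t:ℝ))) := by
      funext n
      simp [hurec n t, sub_sub_cancel_left]
    have h3 : Filter.Tendsto (fun n => F (useq n) (t:ℝ)) Filter.atTop
        (nhds (F uplus (t:ℝ))) := by
      have hpair : Filter.Tendsto (fun n => ((useq n, (t:ℝ)) :
          C(Set.Icc (0:ℝ) Tp, E₁) × ℝ)) Filter.atTop (nhds (uplus, (t:ℝ))) :=
        hlim.prodMk_nhds tendsto_const_nhds
      exact (hFc.tendsto (uplus, (t:ℝ))).comp hpair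
    have h4 : Filter.Tendsto (fun n => -(Ainv (F (useq n) (t:ℝ)))) Filter.atTop
        (nhds (-(Ainv (F uplus (t:ℝ))))) :=
      ((Ainv.continuous.tendsto _).comp h3).neg
    rw [h2] at h1
    have h5 : -(Ainv (F uplus (t:ℝ))) = 0 := tendsto_nhds_unique h4 h1
    have h6 : Ainv (F uplus (t:ℝ)) = 0 := by simpa using h5
    calc F uplus (t:ℝ) = A (Ainv (F uplus (t:ℝ))) := (hA₂ _).symm
      _ = 0 := by rw [h6, map_zero]
  · refine le_of_tendsto hlim.norm (Filter.Eventually.of_forall (fun n => ?_))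
    exact (hun n).trans (hrb n).2
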